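/- With a_i pairwise distinct, the Uhlenbeck integrals F_{B_1},…,F_{B_n} are functionally independent on T*S^n (their differentials are linearly independent on an open dense set) if and only if the vectors B_1,…,B_n ∈ ℝ^{n+1} are linearly independent and (1,1,…,1) ∉ Span(B_1,…,B_n). -/

import Mathlib

open scoped BigOperators

/-- Ambient coordinates on `T*Sⁿ ⊂ ℝ^{n+1} × ℝ^{n+1}`: pairs `(x, p)`. -/
abbrev Phase (N : ℕ) := (Fin N → ℝ) × (Fin N → ℝ)

/-- The canonical Poisson bracket in the ambient coordinates `(x, p)`:
`{F,G} = ∑ₖ (∂F/∂pₖ ∂G/∂xₖ - ∂F/∂xₖ ∂G/∂pₖ)`. -/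
noncomputable def pb {N : ℕ} (F G : Phase N → ℝ) (z : Phase N) : ℝ :=
  ∑ k, (fderiv ℝ F z ((0 : Fin N → ℝ), Pi.single k 1)
          * fderiv ℝ G z (Pi.single k 1, (0 : Fin N → ℝ))
      - fderiv ℝ F z (Pi.single k 1, (0 : Fin N → ℝ))
          * fderiv ℝ G z ((0 : Fin N → ℝ), Pi.single k 1))

/-- `T*Sⁿ` realized as the constraint set `{|x| = 1, ⟨x,p⟩ = 0}`. -/
def TS (N : ℕ) : Set (Phase N) := {z | (∑ k, (z.1 k)^2 = 1) ∧ (∑ k, z.1 k * z.2 k = 0)}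

/-- Momentum function `M_{ij}` of the rotation `Xⁱ ∂_{Xʲ} - Xʲ ∂_{Xⁱ}`. -/
def Mf {N : ℕ} (i j : Fin N) (z : Phase N) : ℝ := z.1 i * z.2 j - z.1 j * z.2 i

/-- The Uhlenbeck integral
`F_B = (1/2) ∑_{i<j} ((bᵢ-bⱼ)/(aᵢ-aⱼ)) M_{ij}² + ∑ᵢ bᵢ (Xⁱ)²`. -/
noncomputable def FB {N : ℕ} (a B : Fin N → ℝ) (z : Phase N) : ℝ :=
  (1/2) * ∑ i, ∑ j ∈ Finset.Ioi i, ((B i - B j)/(a i - a j)) * (Mf i j z)^2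
    + ∑ i, B i * (z.1 i)^2

/-- A vector `w` is tangent to the constraint set `T*Sⁿ = {|x|²=1, ⟨x,p⟩=0}` at `z`. -/
def TangentTS {N : ℕ} (z w : Phase N) : Prop :=
  (∑ k, z.1 k * w.1 k = 0) ∧ (∑ k, (w.1 k * z.2 k + z.1 k * w.2 k) = 0)

/-- The differentials of the functions `F k` (restricted to the tangent space of
`T*Sⁿ` at `z`) are linearly independent. -/
def IndepAt {N m : ℕ} (F : Fin m → (Phase N → ℝ)) (z : Phase N) : Prop :=
  ∀ c : Fin m → ℝ,
    (∀ w : Phase N, TangentTS z w → ∑ k, c k * fderiv ℝ (F k) z w = 0) → c = 0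



open Matrix Polynomial

lemma gram_det_eq_zero_iff' {R C : Type*} [Fintype R] [Fintype C] [DecidableEq C]
    (A : Matrix R C ℝ) :
    (Aᵀ * A).det = 0 ↔ ∃ v ≠ 0, A.mulVec v = 0 := by
  rw [← Matrix.exists_mulVec_eq_zero_iff]
  constructor
  · rintro ⟨v, hv0, hv⟩
    refine ⟨v, hv0, ?_⟩
    have h1 : v ⬝ᵥ ((Aᵀ * A).mulVec v) = (A.mulVec v) ⬝ᵥ (A.mulVec v) := by
      rw [← Matrix.mulVec_mulVec, Matrix.dotProduct_mulVec, Matrix.vecMul_transpose]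
    rw [hv, dotProduct_zero] at h1
    exact (dotProduct_self_eq_zero.mp h1.symm)
  · rintro ⟨v, hv0, hv⟩
    exact ⟨v, hv0, by rw [← Matrix.mulVec_mulVec, hv, Matrix.mulVec_zero]⟩

namespace Uhl
variable {N n : ℕ}

lemma gram_det_eq_zero_iff {R C : Type*} [Fintype R] [Fintype C] [DecidableEq C]
    (A : Matrix R C ℝ) :
    (Aᵀ * A).det = 0 ↔ ∃ v ≠ 0, A.mulVec v = 0 := gram_det_eq_zero_iff' A


noncomputable def Xc (i : Fin N) : Phase N →L[ℝ] ℝ :=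
  (ContinuousLinearMap.proj i).comp (ContinuousLinearMap.fst ℝ (Fin N → ℝ) (Fin N → ℝ))
noncomputable def Pc (i : Fin N) : Phase N →L[ℝ] ℝ :=
  (ContinuousLinearMap.proj i).comp (ContinuousLinearMap.snd ℝ (Fin N → ℝ) (Fin N → ℝ))

@[simp] lemma Xc_apply (i : Fin N) (w : Phase N) : Xc i w = w.1 i := rfl
@[simp] lemma Pc_apply (i : Fin N) (w : Phase N) : Pc i w = w.2 i := rfl

lemma hasFDerivAt_X (i : Fin N) (z : Phase N) :
    HasFDerivAt (fun z : Phase N => z.1 i) (Xc i) z := (Xc i).hasFDerivAt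
lemma hasFDerivAt_P (i : Fin N) (z : Phase N) :
    HasFDerivAt (fun z : Phase N => z.2 i) (Pc i) z := (Pc i).hasFDerivAt

noncomputable def Dm (i j : Fin N) (z : Phase N) : Phase N →L[ℝ] ℝ :=
  (z.1 i • Pc j + z.2 j • Xc i) - (z.1 j • Pc i + z.2 i • Xc j)

lemma hasFDerivAt_Mf (i j : Fin N) (z : Phase N) :
    HasFDerivAt (Mf i j) (Dm i j z) z :=
  ((hasFDerivAt_X i z).mul (hasFDerivAt_P j z)).sub
    ((hasFDerivAt_X j z).mul (hasFDerivAt_P i z))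

lemma hasFDerivAt_sq {f : Phase N → ℝ} {f' : Phase N →L[ℝ] ℝ} {z : Phase N}
    (h : HasFDerivAt f f' z) : HasFDerivAt (fun z => f z ^ 2) ((2 * f z) • f') z := by
  have := h.mul h
  have e : f z • f' + f z • f' = (2 * f z) • f' := by
    rw [two_mul, add_smul]
  rw [e] at this
  refine this.congr_of_eventuallyEq (Filter.Eventually.of_forall fun y => ?_)
  simp [pow_two]

noncomputable def DFB (a b : Fin N → ℝ) (z : Phase N) : Phase N →L[ℝ] ℝ :=
  (1/2 : ℝ) • (∑ i, ∑ j ∈ Finset.Ioi i,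
      ((b i - b j)/(a i - a j)) • ((2 * Mf i j z) • Dm i j z))
    + ∑ i, b i • ((2 * z.1 i) • Xc i)

lemma hasFDerivAt_FB (a b : Fin N → ℝ) (z : Phase N) :
    HasFDerivAt (FB a b) (DFB a b z) z := by
  have h1 : HasFDerivAt (fun z : Phase N => ∑ i, ∑ j ∈ Finset.Ioi i,
      ((b i - b j)/(a i - a j)) * (Mf i j z)^2)
      (∑ i, ∑ j ∈ Finset.Ioi i,
        ((b i - b j)/(a i - a j)) • ((2 * Mf i j z) • Dm i j z)) z := by
    refine HasFDerivAt.fun_sum fun i _ => HasFDerivAt.fun_sum fun j _ => ?_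
    exact (hasFDerivAt_sq (hasFDerivAt_Mf i j z)).const_mul _
  have h2 : HasFDerivAt (fun z : Phase N => ∑ i, b i * (z.1 i)^2)
      (∑ i, b i • ((2 * z.1 i) • Xc i)) z := by
    refine HasFDerivAt.fun_sum fun i _ => ?_
    exact (hasFDerivAt_sq (hasFDerivAt_X i z)).const_mul _
  exact (h1.const_mul _).add h2

noncomputable def Fd (a b : Fin N → ℝ) (z w : Phase N) : ℝ :=
  (1/2) * ∑ i, ∑ j ∈ Finset.Ioi i, ((b i - b j)/(a i - a j)) * (2 * Mf i j z *
      ((z.1 i * w.2 j + z.2 j * w.1 i) - (z.1 j * w.2 i + z.2 i * w.1 j)))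
    + ∑ i, b i * (2 * z.1 i * w.1 i)

lemma fderiv_FB_apply (a b : Fin N → ℝ) (z w : Phase N) :
    fderiv ℝ (FB a b) z w = Fd a b z w := by
  rw [(hasFDerivAt_FB a b z).fderiv]
  simp only [DFB, Fd, ContinuousLinearMap.add_apply, ContinuousLinearMap.smul_apply,
    ContinuousLinearMap.coe_sum', Finset.sum_apply, Dm, ContinuousLinearMap.sub_apply,
    Xc_apply, Pc_apply, smul_eq_mul]


lemma Fd_linear {n : ℕ} (a : Fin N → ℝ) (B : Fin n → Fin N → ℝ) (c : Fin n → ℝ) (z w : Phase N) :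
    Fd a (fun i => ∑ k, c k * B k i) z w = ∑ k, c k * Fd a (B k) z w := by
  simp only [Fd, mul_add, Finset.sum_add_distrib]
  congr 1
  · simp only [mul_left_comm (c _) (1/2 : ℝ), ← Finset.mul_sum]
    congr 1
    conv_rhs => simp only [Finset.mul_sum]
    conv_rhs => rw [Finset.sum_comm]
    refine Finset.sum_congr rfl fun i _ => ?_
    conv_rhs => rw [Finset.sum_comm]
    refine Finset.sum_congr rfl fun j _ => ?_
    rw [← Finset.sum_sub_distrib, Finset.sum_div, Finset.sum_mul]
    refine Finset.sum_congr rfl fun k _ => ?_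
    ring
  · conv_rhs => simp only [Finset.mul_sum]
    conv_rhs => rw [Finset.sum_comm]
    refine Finset.sum_congr rfl fun i _ => ?_
    rw [Finset.sum_mul]
    refine Finset.sum_congr rfl fun k _ => ?_
    ring

noncomputable def Q1 (a b x' p' : Fin N → ℝ) (m : Fin N) : ℝ :=
  (1/2) * ∑ i, ∑ j ∈ Finset.Ioi i, ((b i - b j)/(a i - a j)) * (2 * Mf i j (x', p') *
      (p' j * (Pi.single m 1 : Fin N → ℝ) i - p' i * (Pi.single m 1 : Fin N → ℝ) j))

noncomputable def Q0 (b x' : Fin N → ℝ) (m : Fin N) : ℝ :=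
  ∑ i, b i * (2 * x' i * (Pi.single m 1 : Fin N → ℝ) i)

noncomputable def Q2 (a b x' p' : Fin N → ℝ) (m : Fin N) : ℝ :=
  (1/2) * ∑ i, ∑ j ∈ Finset.Ioi i, ((b i - b j)/(a i - a j)) * (2 * Mf i j (x', p') *
      (x' i * (Pi.single m 1 : Fin N → ℝ) j - x' j * (Pi.single m 1 : Fin N → ℝ) i))

lemma Q0_eq (b x' : Fin N → ℝ) (m : Fin N) : Q0 b x' m = 2 * b m * x' m := by
  rw [Q0, Finset.sum_eq_single m]
  · simp [Pi.single_apply]; ring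
  · intro i _ hi
    simp [Pi.single_apply, hi]
  · simp

lemma Fd_xi (a b x' p' : Fin N → ℝ) (s : ℝ) (m : Fin N) :
    Fd a b (x', fun i => s * p' i) (Pi.single m 1, 0) = s^2 * Q1 a b x' p' m + Q0 b x' m := by
  simp only [Fd, Q1, Q0, Mf, Pi.zero_apply]
  congr 1
  rw [mul_left_comm (s^2)]
  congr 1
  rw [Finset.mul_sum]
  refine Finset.sum_congr rfl fun i _ => ?_
  rw [Finset.mul_sum]
  refine Finset.sum_congr rfl fun j _ => ?_
  ring

lemma Fd_eta (a b x' p' : Fin N → ℝ) (s : ℝ) (m : Fin N) :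
    Fd a b (x', fun i => s * p' i) (0, Pi.single m 1) = s * Q2 a b x' p' m := by
  simp only [Fd, Q2, Mf, Pi.zero_apply, mul_zero, Finset.sum_const_zero, add_zero]
  rw [mul_left_comm s]
  congr 1
  rw [Finset.mul_sum]
  refine Finset.sum_congr rfl fun i _ => ?_
  rw [Finset.mul_sum]
  refine Finset.sum_congr rfl fun j _ => ?_
  ring

/-- Matrix over polynomials encoding the constraint system. -/
noncomputable def Gp (a : Fin N → ℝ) (B : Fin n → Fin N → ℝ) (x' p' : Fin N → ℝ) :
    Matrix (Fin N ⊕ Fin N) (Fin n ⊕ Bool) (Polynomial ℝ) :=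
  fun r c => match r, c with
  | .inl m, .inl k => C (Q1 a (B k) x' p' m) * X^2 + C (Q0 (B k) x' m)
  | .inl m, .inr false => C (- x' m)
  | .inl m, .inr true => - C (p' m) * X
  | .inr m, .inl k => C (Q2 a (B k) x' p' m) * X
  | .inr m, .inr false => 0
  | .inr m, .inr true => C (- x' m)

/-- Its evaluation at `s`. -/
noncomputable def Gr (a : Fin N → ℝ) (B : Fin n → Fin N → ℝ) (x' p' : Fin N → ℝ) (s : ℝ) :
    Matrix (Fin N ⊕ Fin N) (Fin n ⊕ Bool) ℝ :=
  fun r c => match r, c with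
  | .inl m, .inl k => Q1 a (B k) x' p' m * s^2 + Q0 (B k) x' m
  | .inl m, .inr false => - x' m
  | .inl m, .inr true => - p' m * s
  | .inr m, .inl k => Q2 a (B k) x' p' m * s
  | .inr m, .inr false => 0
  | .inr m, .inr true => - x' m

lemma Gp_map (a : Fin N → ℝ) (B : Fin n → Fin N → ℝ) (x' p' : Fin N → ℝ) (s : ℝ) :
    (Gp a B x' p').map (evalRingHom s) = Gr a B x' p' s := by
  ext r c
  rcases r with m | m <;> rcases c with k | bb
  · simp [Gp, Gr, Matrix.map_apply]
  · cases bb <;> simp [Gp, Gr, Matrix.map_apply]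
  · simp [Gp, Gr, Matrix.map_apply]
  · cases bb <;> simp [Gp, Gr, Matrix.map_apply]

noncomputable def dpoly (a : Fin N → ℝ) (B : Fin n → Fin N → ℝ) (x' p' : Fin N → ℝ) :
    Polynomial ℝ := ((Gp a B x' p')ᵀ * Gp a B x' p').det

lemma dpoly_eval (a : Fin N → ℝ) (B : Fin n → Fin N → ℝ) (x' p' : Fin N → ℝ) (s : ℝ) :
    (dpoly a B x' p').eval s = ((Gr a B x' p' s)ᵀ * Gr a B x' p' s).det := by
  rw [← Gp_map a B x' p' s, ← Matrix.transpose_map]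
  rw [show ((Gp a B x' p')ᵀ.map (evalRingHom s)) * ((Gp a B x' p').map (evalRingHom s))
      = ((Gp a B x' p')ᵀ * (Gp a B x' p')).map (evalRingHom s) from
    (Matrix.map_mul).symm]
  rw [dpoly, ← RingHom.mapMatrix_apply, ← RingHom.map_det]
  rfl


lemma sum_mul_single (u : Fin N → ℝ) (m : Fin N) :
    ∑ k, u k * (Pi.single m 1 : Fin N → ℝ) k = u m := by
  rw [Finset.sum_eq_single m]
  · simp
  · intro i _ hi; simp [Pi.single_apply, hi]
  · simp

section Step
variable (a : Fin (n+1) → ℝ) (B : Fin n → Fin (n+1) → ℝ) (x' p' : Fin (n+1) → ℝ)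

lemma mulVec_expand (s : ℝ) (v : Fin n ⊕ Bool → ℝ) (r : Fin (n+1) ⊕ Fin (n+1)) :
    (Gr a B x' p' s).mulVec v r
      = ∑ k, Gr a B x' p' s r (Sum.inl k) * v (Sum.inl k)
        + (Gr a B x' p' s r (Sum.inr true) * v (Sum.inr true)
            + Gr a B x' p' s r (Sum.inr false) * v (Sum.inr false)) := by
  simp [Matrix.mulVec, dotProduct, Fintype.sum_sum_type]

theorem dpoly_eval_zero_ne
    (keyB : ∀ (c : Fin n → ℝ) (lam : ℝ), (∀ m, ∑ k, c k * B k m = lam) → c = 0)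
    (hne : ∀ i, x' i ≠ 0) :
    (dpoly a B x' p').eval 0 ≠ 0 := by
  rw [dpoly_eval]
  intro h
  obtain ⟨v, hv0, hv⟩ := (gram_det_eq_zero_iff _).mp h
  apply hv0
  have hrow1 : ∀ m, ∑ k, (fun k => v (Sum.inl k)) k * B k m = v (Sum.inr false) / 2 := by
    intro m
    have h0 := congrFun hv (Sum.inl m)
    rw [mulVec_expand] at h0
    simp only [Gr, Pi.zero_apply] at h0
    have h1 : ∑ k, (Q1 a (B k) x' p' m * (0:ℝ)^2 + Q0 (B k) x' m) * v (Sum.inl k)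
        = 2 * x' m * ∑ k, v (Sum.inl k) * B k m := by
      rw [Finset.mul_sum]
      refine Finset.sum_congr rfl fun k _ => ?_
      rw [Q0_eq]; ring
    rw [h1] at h0
    have h3 : x' m * (2 * (∑ k, v (Sum.inl k) * B k m) - v (Sum.inr false)) = 0 := by
      linear_combination h0
    have h4 := (mul_eq_zero.mp h3).resolve_left (hne m)
    simp only []
    linarith
  have hc0 := keyB _ _ hrow1
  have hfalse : v (Sum.inr false) = 0 := by
    have h5 := hrow1 0
    rw [hc0] at h5
    simp at h5
    linarith
  have htrue : v (Sum.inr true) = 0 := by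
    have h0 := congrFun hv (Sum.inr 0)
    rw [mulVec_expand] at h0
    simp only [Gr, Pi.zero_apply, mul_zero, zero_mul, Finset.sum_const_zero, zero_add,
      add_zero] at h0
    rcases mul_eq_zero.mp h0 with h | h
    · exact absurd (neg_eq_zero.mp h) (hne 0)
    · exact h
  funext r
  rcases r with k | bb
  · exact congrFun hc0 k
  · cases bb
    · exact hfalse
    · exact htrue

theorem indep_of_not_root
    (keyB : ∀ (c : Fin n → ℝ) (lam : ℝ), (∀ m, ∑ k, c k * B k m = lam) → c = 0)
    (hx1 : ∑ k, x' k ^ 2 = 1) (hxp : ∑ k, x' k * p' k = 0) (hne : ∀ i, x' i ≠ 0)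
    {s : ℝ} (hroot : ¬ (dpoly a B x' p').IsRoot s) :
    IndepAt (fun k => FB a (B k)) (x', fun i => s * p' i) := by
  intro c hc
  set L := fderiv ℝ (FB a (fun i => ∑ k, c k * B k i)) (x', fun i => s * p' i) with hLdef
  have hLw : ∀ w, L w = ∑ k, c k * fderiv ℝ (FB a (B k)) (x', fun i => s * p' i) w := by
    intro w
    rw [hLdef, fderiv_FB_apply, Fd_linear]
    exact Finset.sum_congr rfl fun k _ => by rw [fderiv_FB_apply]
  have hL0 : ∀ w, TangentTS (x', fun i => s * p' i) w → L w = 0 := fun w hw => by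
    rw [hLw]; exact hc w hw
  have horth : ∀ m, ∑ k, x' k * ((Pi.single m 1 : Fin (n+1) → ℝ) - x' m • x') k = 0 := by
    intro m
    simp only [Pi.sub_apply, Pi.smul_apply, smul_eq_mul, mul_sub]
    rw [Finset.sum_sub_distrib, sum_mul_single]
    have h2 : ∑ k, x' k * (x' m * x' k) = x' m * ∑ k, x' k ^ 2 := by
      rw [Finset.mul_sum]; exact Finset.sum_congr rfl fun k _ => by ring
    rw [h2, hx1]; ring
  have claimEta0 : ∀ η, (∑ k, x' k * η k = 0) → L (0, η) = 0 := by
    intro η hη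
    refine hL0 (0, η) ⟨by simp, ?_⟩
    simpa using hη
  have claimEta : ∀ m, L (0, Pi.single m 1) = x' m * L (0, x') := by
    intro m
    have hdecomp : ((0 : Fin (n+1) → ℝ), (Pi.single m 1 : Fin (n+1) → ℝ))
        = ((0 : Fin (n+1) → ℝ), Pi.single m 1 - x' m • x')
          + x' m • ((0 : Fin (n+1) → ℝ), x') := by
      refine Prod.ext ?_ ?_
      · simp
      · funext i; simp
    rw [hdecomp, map_add, L.map_smul, claimEta0 _ (horth m), zero_add, smul_eq_mul]
  have claimXi0 : ∀ ξ, (∑ k, x' k * ξ k = 0) →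
      L (ξ, (-(s * ∑ k, ξ k * p' k)) • x') = 0 := by
    intro ξ hξ
    refine hL0 _ ⟨hξ, ?_⟩
    have key : ∀ T : ℝ, T = ∑ k, ξ k * p' k →
        ∑ k, (ξ k * (s * p' k) + x' k * ((-(s * T)) * x' k)) = 0 := by
      intro T hT
      rw [Finset.sum_add_distrib]
      have e1 : ∑ k, ξ k * (s * p' k) = s * ∑ k, ξ k * p' k := by
        rw [Finset.mul_sum]; exact Finset.sum_congr rfl fun k _ => by ring
      have e2 : ∑ k, x' k * (-(s * T) * x' k) = -(s * T) * ∑ k, x' k ^ 2 := by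
        rw [Finset.mul_sum]; exact Finset.sum_congr rfl fun k _ => by ring
      rw [e1, e2, hx1, hT]; ring
    have := key _ rfl
    simpa [Pi.smul_apply, smul_eq_mul] using this
  have claimT : ∀ m, ∑ k, ((Pi.single m 1 : Fin (n+1) → ℝ) - x' m • x') k * p' k = p' m := by
    intro m
    simp only [Pi.sub_apply, Pi.smul_apply, smul_eq_mul, sub_mul]
    rw [Finset.sum_sub_distrib]
    have h1 : ∑ k, (Pi.single m 1 : Fin (n+1) → ℝ) k * p' k = p' m := by
      rw [Finset.sum_congr rfl fun k _ => mul_comm _ _, sum_mul_single]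
    have h2 : ∑ k, x' m * x' k * p' k = x' m * ∑ k, x' k * p' k := by
      rw [Finset.mul_sum]; exact Finset.sum_congr rfl fun k _ => by ring
    rw [h1, h2, hxp]; ring
  have claimXi : ∀ m, L (Pi.single m 1, 0)
      = x' m * L (x', 0) + (s * p' m) * L (0, x') := by
    intro m
    have h5 := claimXi0 ((Pi.single m 1 : Fin (n+1) → ℝ) - x' m • x') (horth m)
    rw [claimT m] at h5
    have hdecomp : ((Pi.single m 1 : Fin (n+1) → ℝ), (0 : Fin (n+1) → ℝ))
        = (Pi.single m 1 - x' m • x', (-(s * p' m)) • x')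
          + x' m • (x', (0 : Fin (n+1) → ℝ)) + (s * p' m) • ((0 : Fin (n+1) → ℝ), x') := by
      refine Prod.ext ?_ ?_
      · funext i; simp
      · funext i; simp
    rw [hdecomp, map_add, map_add, L.map_smul, L.map_smul, h5, zero_add, smul_eq_mul, smul_eq_mul]
  have hker : (Gr a B x' p' s).mulVec
      (Sum.elim c (fun bb => match bb with | true => L (0, x') | false => L (x', 0))) = 0 := by
    funext r
    rw [mulVec_expand]
    rcases r with m | m
    · simp only [Gr, Sum.elim_inl, Sum.elim_inr, if_true, if_false, Pi.zero_apply]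
      have h1 : ∑ k, (Q1 a (B k) x' p' m * s^2 + Q0 (B k) x' m) * c k
          = ∑ k, c k * fderiv ℝ (FB a (B k)) (x', fun i => s * p' i) (Pi.single m 1, 0) := by
        refine Finset.sum_congr rfl fun k _ => ?_
        rw [fderiv_FB_apply, Fd_xi]; ring
      rw [h1, ← hLw (Pi.single m 1, 0), claimXi m]
      ring
    · simp only [Gr, Sum.elim_inl, Sum.elim_inr, if_true, if_false, Pi.zero_apply]
      have h1 : ∑ k, (Q2 a (B k) x' p' m * s) * c k
          = ∑ k, c k * fderiv ℝ (FB a (B k)) (x', fun i => s * p' i) (0, Pi.single m 1) := by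
        refine Finset.sum_congr rfl fun k _ => ?_
        rw [fderiv_FB_apply, Fd_eta]; ring
      rw [h1, ← hLw (0, Pi.single m 1), claimEta m]
      ring
  by_contra hcne
  refine hroot ?_
  rw [Polynomial.IsRoot, dpoly_eval]
  refine (gram_det_eq_zero_iff _).mpr ⟨_, ?_, hker⟩
  intro h
  exact hcne (funext fun k => congrFun h (Sum.inl k))

end Step

lemma stepA {N : ℕ} (z : Phase N) (hx : ∑ k, z.1 k ^ 2 = 1)
    (hxp : ∑ k, z.1 k * z.2 k = 0) (ε : ℝ) (hε : 0 < ε) :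
    ∃ x' p' : Fin N → ℝ, (∑ k, x' k ^ 2 = 1) ∧ (∑ k, x' k * p' k = 0) ∧ (∀ i, x' i ≠ 0)
      ∧ dist z ((x', p') : Phase N) < ε := by
  obtain ⟨x, p⟩ := z
  simp only at hx hxp ⊢
  set g : ℝ → (Fin N → ℝ) := fun t => (Real.sqrt (∑ k, (x k + t)^2))⁻¹ • (fun k => x k + t)
    with hg
  have hS0 : (∑ k, (x k + (0:ℝ))^2) = 1 := by simpa using hx
  have hsum : ContinuousAt (fun t : ℝ => ∑ k, (x k + t)^2) 0 :=
    (Continuous.continuousAt (by continuity))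
  have hsqrt : ContinuousAt (fun t : ℝ => Real.sqrt (∑ k, (x k + t)^2)) 0 :=
    Real.continuous_sqrt.continuousAt.comp hsum
  have hsqrt0 : Real.sqrt (∑ k, (x k + (0:ℝ))^2) = 1 := by rw [hS0]; exact Real.sqrt_one
  have hinv : ContinuousAt (fun t : ℝ => (Real.sqrt (∑ k, (x k + t)^2))⁻¹) 0 :=
    hsqrt.inv₀ (by rw [hsqrt0]; norm_num)
  have hadd : ContinuousAt (fun t : ℝ => (fun k : Fin N => x k + t)) 0 :=
    Continuous.continuousAt (by continuity)
  have hgc : ContinuousAt g 0 := hinv.smul hadd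
  have hg0 : g 0 = x := by
    funext k
    simp only [hg, Pi.smul_apply, smul_eq_mul]
    rw [hsqrt0, inv_one, one_mul, add_zero]
  have hipc : ContinuousAt (fun t : ℝ => ∑ k, g t k * p k) 0 := by
    have hk : ∀ k : Fin N, ContinuousAt (fun t : ℝ => g t k * p k) 0 :=
      fun k => (((continuous_apply k).continuousAt).comp hgc).mul continuousAt_const
    exact tendsto_finset_sum _ fun k _ => hk k
  have hGc : ContinuousAt (fun t : ℝ => ((g t, p - (∑ k, g t k * p k) • g t) : Phase N)) 0 :=
    hgc.prodMk (continuousAt_const.sub (hipc.smul hgc))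
  have hG0 : ((g 0, p - (∑ k, g 0 k * p k) • g 0) : Phase N) = (x, p) := by
    rw [hg0]
    simp [hxp]
  set l := nhdsWithin (0:ℝ) (Set.Ioi 0) with hl
  have htends : Filter.Tendsto (fun t : ℝ => ((g t, p - (∑ k, g t k * p k) • g t) : Phase N))
      l (nhds ((x, p) : Phase N)) := by
    rw [← hG0]
    exact hGc.tendsto.mono_left nhdsWithin_le_nhds
  have hEdist : ∀ᶠ t in l, dist ((x, p) : Phase N)
      ((g t, p - (∑ k, g t k * p k) • g t) : Phase N) < ε := by
    have h := htends (Metric.ball_mem_nhds ((x, p) : Phase N) hε)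
    filter_upwards [h] with t ht
    rw [dist_comm]
    exact Metric.mem_ball.mp ht
  have hpos : ∀ᶠ t in l, 0 < ∑ k, (x k + t)^2 := by
    have h1 : Filter.Tendsto (fun t : ℝ => ∑ k, (x k + t)^2) l (nhds 1) := by
      rw [← hS0]
      exact hsum.tendsto.mono_left nhdsWithin_le_nhds
    exact h1.eventually (eventually_gt_nhds one_pos)
  have hcoord : ∀ᶠ t in l, ∀ i, x i + t ≠ 0 := by
    rw [Filter.eventually_all]
    intro i
    by_cases hxi : x i = 0
    · filter_upwards [self_mem_nhdsWithin] with t ht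
      rw [hxi, zero_add]
      exact ne_of_gt ht
    · have h2 : Filter.Tendsto (fun t : ℝ => x i + t) l (nhds (x i)) := by
        have h3 : Filter.Tendsto (fun t : ℝ => x i + t) (nhds 0) (nhds (x i + 0)) :=
          (continuous_const.add continuous_id).continuousAt
        rw [add_zero] at h3
        exact h3.mono_left nhdsWithin_le_nhds
      exact h2.eventually (eventually_ne_nhds hxi)
  obtain ⟨t, hd, hp, hco⟩ := (hEdist.and (hpos.and hcoord)).exists
  obtain ⟨hp, hco⟩ := (⟨hp, hco⟩ : _ ∧ _)
  have hgt1 : ∑ k, g t k ^ 2 = 1 := by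
    simp only [hg, Pi.smul_apply, smul_eq_mul]
    have e : ∑ k, ((Real.sqrt (∑ j, (x j + t)^2))⁻¹ * (x k + t))^2
        = ((Real.sqrt (∑ j, (x j + t)^2))⁻¹)^2 * ∑ k, (x k + t)^2 := by
      rw [Finset.mul_sum]; exact Finset.sum_congr rfl fun k _ => by ring
    rw [e, inv_pow, Real.sq_sqrt hp.le]
    exact inv_mul_cancel₀ (ne_of_gt hp)
  refine ⟨g t, p - (∑ k, g t k * p k) • g t, hgt1, ?_, ?_, hd⟩
  · simp only [Pi.sub_apply, Pi.smul_apply, smul_eq_mul, mul_sub]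
    rw [Finset.sum_sub_distrib]
    have e : ∑ k, g t k * ((∑ j, g t j * p j) * g t k)
        = (∑ j, g t j * p j) * ∑ k, g t k ^ 2 := by
      rw [Finset.mul_sum]; exact Finset.sum_congr rfl fun k _ => by ring
    rw [e, hgt1, mul_one, sub_self]
  · intro i
    simp only [hg, Pi.smul_apply, smul_eq_mul]
    exact mul_ne_zero (inv_ne_zero (ne_of_gt (Real.sqrt_pos.mpr hp))) (hco i)


lemma Fd_const (a : Fin N → ℝ) (lam : ℝ) (z w : Phase N)
    (hw : ∑ k, z.1 k * w.1 k = 0) : Fd a (fun _ => lam) z w = 0 := by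
  simp only [Fd, sub_self, zero_div, zero_mul, Finset.sum_const_zero, mul_zero, zero_add]
  have h : ∀ i : Fin N, lam * (2 * z.1 i * w.1 i) = (2*lam) * (z.1 i * w.1 i) := fun i => by ring
  rw [Finset.sum_congr rfl fun i _ => h i, ← Finset.mul_sum, hw, mul_zero]


end Uhl

open Uhl in
/-- With `aᵢ` pairwise distinct, the Uhlenbeck integrals
`F_{B₁},…,F_{Bₙ}` are functionally independent on `T*Sⁿ` (their differentials are
linearly independent on a dense subset of `T*Sⁿ`) if and only if `B₁,…,Bₙ ∈ ℝ^{n+1}`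
are linearly independent and `(1,…,1) ∉ Span(B₁,…,Bₙ)`. -/
theorem uhlenbeck_functional_independence (n : ℕ) (a : Fin (n+1) → ℝ)
    (ha : Function.Injective a) (B : Fin n → (Fin (n+1) → ℝ)) :
    (∀ z ∈ TS (n+1), z ∈ closure {z' | z' ∈ TS (n+1) ∧ IndepAt (fun k => FB a (B k)) z'})
    ↔ (LinearIndependent ℝ B ∧
        (fun _ => (1:ℝ)) ∉ Submodule.span ℝ (Set.range B)) := by
  constructor
  · intro hdense
    have hz0 : (((Pi.single 0 1 : Fin (n+1) → ℝ), (0 : Fin (n+1) → ℝ)) : Phase (n+1))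
        ∈ TS (n+1) := by
      constructor
      · show ∑ k, (Pi.single 0 1 : Fin (n+1) → ℝ) k ^ 2 = 1
        have e : ∀ k : Fin (n+1), (Pi.single 0 1 : Fin (n+1) → ℝ) k ^ 2
            = (Pi.single 0 1 : Fin (n+1) → ℝ) k * (Pi.single 0 1 : Fin (n+1) → ℝ) k :=
          fun k => sq _
        rw [Finset.sum_congr rfl fun k _ => e k, sum_mul_single]
        exact Pi.single_eq_same 0 1
      · show ∑ k, (Pi.single 0 1 : Fin (n+1) → ℝ) k * (0 : Fin (n+1) → ℝ) k = 0
        simp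
    have hmem := hdense _ hz0
    have hne : {z' | z' ∈ TS (n+1) ∧ IndepAt (fun k => FB a (B k)) z'}.Nonempty := by
      rcases Set.eq_empty_or_nonempty
          {z' | z' ∈ TS (n+1) ∧ IndepAt (fun k => FB a (B k)) z'} with he | h
      · rw [he, closure_empty] at hmem
        exact absurd hmem (Set.notMem_empty _)
      · exact h
    obtain ⟨z1, hz1TS, hz1I⟩ := hne
    have key : ∀ (c : Fin n → ℝ) (lam : ℝ), (∀ i, ∑ k, c k * B k i = lam) → c = 0 := by
      intro c lam hc
      apply hz1I c
      intro w hw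
      have h1 : ∑ k, c k * fderiv ℝ (FB a (B k)) z1 w
          = Fd a (fun i => ∑ k, c k * B k i) z1 w := by
        rw [Fd_linear]
        exact (Finset.sum_congr rfl fun k _ => by rw [fderiv_FB_apply]).symm
      show ∑ k, c k * fderiv ℝ (FB a (B k)) z1 w = 0
      rw [h1, show (fun i => ∑ k, c k * B k i) = (fun _ => lam) from funext hc]
      exact Fd_const a lam z1 w hw.1
    constructor
    · rw [Fintype.linearIndependent_iff]
      intro g hg
      have hg' : ∀ i, ∑ k, g k * B k i = 0 := by
        intro i
        have := congrFun hg i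
        simpa using this
      have := key g 0 hg'
      intro i; rw [this]; rfl
    · intro hones
      rw [Submodule.mem_span_range_iff_exists_fun ℝ] at hones
      obtain ⟨c, hc⟩ := hones
      have hc' : ∀ i, ∑ k, c k * B k i = 1 := by
        intro i
        have := congrFun hc i
        simpa using this
      have hc0 := key c 1 hc'
      have h1 := hc' 0
      rw [hc0] at h1
      simp at h1
  · rintro ⟨hLI, hspan⟩ z hz
    have keyB : ∀ (c : Fin n → ℝ) (lam : ℝ), (∀ m, ∑ k, c k * B k m = lam) → c = 0 := by
      intro c lam hc
      by_cases hlam : lam = 0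
      · subst hlam
        have h0 : ∑ k, c k • B k = 0 := by
          funext i
          simp only [Finset.sum_apply, Pi.smul_apply, smul_eq_mul, Pi.zero_apply]
          exact hc i
        have := Fintype.linearIndependent_iff.mp hLI c h0
        funext k; exact this k
      · exfalso
        apply hspan
        rw [Submodule.mem_span_range_iff_exists_fun ℝ]
        refine ⟨fun k => lam⁻¹ * c k, funext fun i => ?_⟩
        simp only [Finset.sum_apply, Pi.smul_apply, smul_eq_mul]
        have e : ∑ k, lam⁻¹ * c k * B k i = lam⁻¹ * ∑ k, c k * B k i := by
          rw [Finset.mul_sum]; exact Finset.sum_congr rfl fun k _ => by ring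
        rw [e, hc i, inv_mul_cancel₀ hlam]
    rw [Metric.mem_closure_iff]
    intro ε hε
    obtain ⟨x', p', hx1, hxp, hcne, hd1⟩ := stepA z hz.1 hz.2 (ε/2) (by positivity)
    have hd0 := dpoly_eval_zero_ne a B x' p' keyB hcne
    have hdp : dpoly a B x' p' ≠ 0 := fun h => hd0 (by rw [h]; simp)
    have hfin : {s : ℝ | (dpoly a B x' p').IsRoot s}.Finite :=
      Polynomial.finite_setOf_isRoot hdp
    have hcont : ContinuousAt
        (fun s : ℝ => ((x', fun i => s * p' i) : Phase (n+1))) 1 := by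
      apply ContinuousAt.prodMk continuousAt_const
      exact Continuous.continuousAt (by continuity)
    rw [Metric.continuousAt_iff] at hcont
    obtain ⟨δ, hδ0, hδ⟩ := hcont (ε/2) (by positivity)
    have hIoo : (Set.Ioo (1-δ) (1+δ)).Infinite := Set.Ioo_infinite (by linarith)
    obtain ⟨s, hsI, hsroot⟩ := (hIoo.diff hfin).nonempty
    have hsd : dist s 1 < δ := by
      rw [Real.dist_eq]
      rw [abs_sub_lt_iff]
      exact ⟨by linarith [hsI.2], by linarith [hsI.1]⟩
    have hdist2 := hδ hsd
    simp only [one_mul] at hdist2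
    refine ⟨(x', fun i => s * p' i),
      ⟨⟨hx1, ?_⟩, indep_of_not_root a B x' p' keyB hx1 hxp hcne hsroot⟩, ?_⟩
    · show ∑ k, x' k * (s * p' k) = 0
      have e : ∑ k, x' k * (s * p' k) = s * ∑ k, x' k * p' k := by
        rw [Finset.mul_sum]; exact Finset.sum_congr rfl fun k _ => by ring
      rw [e, hxp, mul_zero]
    · have htri := dist_triangle z ((x', p') : Phase (n+1))
        ((x', fun i => s * p' i) : Phase (n+1))
      have : dist ((x', p') : Phase (n+1)) ((x', fun i => s * p' i) : Phase (n+1)) < ε/2 := by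
        rw [dist_comm]
        exact hdist2
      linarith
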